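/- arXiv:1703.10416 — 7 statements merged into one kernel-verified Lean document; each statement's English description precedes it below -/
import Mathlib

section
/- Let $A$ be a commutative ring and let $\alpha_*, \gamma_*, \delta_*$ be the endomorphisms of $A^4$ (with basis $x_1, x_2, y_1, y_2$) given by: $\alpha_*(x_i) = -x_i$, $\alpha_*(y_i) = -y_i$; $\gamma_*(x_1) = -x_2$, $\gamma_*(x_2) = -x_1$, $\gamma_*(y_1) = -y_2$, $\gamma_*(y_2) = -y_1$; $\delta_*(x_1) = -x_1 + x_2$, $\delta_*(x_2) = -x_1$, $\delta_*(y_1) = y_2$, $\delta_*(y_2) = -y_1 - y_2$. Then the quotient of $A^4$ by the submodule generated by all elements $\phi(v) - v$ for $\phi \in \{\alpha_*, \gamma_*, \delta_*\}$ and $v \in A^4$ is the zero module. -/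
theorem stmt_2 (A : Type*) [CommRing A]
    (α γ δ : Module.End A (Fin 4 → A))
    (hα : α = (-(1 : Matrix (Fin 4) (Fin 4) A)).mulVecLin)
    (hγ : γ = (!![0,-1,0,0; -1,0,0,0; 0,0,0,-1; 0,0,-1,0] : Matrix (Fin 4) (Fin 4) A).mulVecLin)
    (hδ : δ = (!![-1,-1,0,0; 1,0,0,0; 0,0,0,-1; 0,0,1,-1] : Matrix (Fin 4) (Fin 4) A).mulVecLin) :
    Subsingleton ((Fin 4 → A) ⧸
      Submodule.span A {w : Fin 4 → A |
        ∃ φ ∈ ({α, γ, δ} : Set (Module.End A (Fin 4 → A))), ∃ v, w = φ v - v}) := by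
  set S := Submodule.span A {w : Fin 4 → A |
        ∃ φ ∈ ({α, γ, δ} : Set (Module.End A (Fin 4 → A))), ∃ v, w = φ v - v} with hSdef
  have gα : ∀ v : Fin 4 → A, α v - v ∈ S := fun v =>
    Submodule.subset_span ⟨α, by simp, v, rfl⟩
  have gδ : ∀ v : Fin 4 → A, δ v - v ∈ S := fun v =>
    Submodule.subset_span ⟨δ, by simp, v, rfl⟩
  have h2 : ∀ v : Fin 4 → A, (2 : A) • v ∈ S := by
    intro v
    have h := S.neg_mem (gα v)
    have : -(α v - v) = (2 : A) • v := by
      subst hα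
      funext i
      simp [Matrix.mulVecLin, Matrix.neg_mulVec]
      ring
    rwa [this] at h
  have e0 : (![1,0,0,0] : Fin 4 → A) ∈ S := by
    have h := S.add_mem (S.add_mem (S.neg_mem (gδ ![1,0,0,0])) (S.neg_mem (gδ ![0,1,0,0])))
      (h2 (-![1,0,0,0]))
    have heq : -(δ ![1,0,0,0] - ![1,0,0,0]) + -(δ ![0,1,0,0] - ![0,1,0,0]) + (2:A) • (-![1,0,0,0])
        = (![1,0,0,0] : Fin 4 → A) := by
      subst hδ
      funext i
      fin_cases i <;>
        simp [Matrix.mulVecLin, Matrix.mulVec, dotProduct, Fin.sum_univ_four, Matrix.vecHead, Matrix.vecTail] <;> ring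
    rwa [heq] at h
  have e1 : (![0,1,0,0] : Fin 4 → A) ∈ S := by
    have h := S.add_mem (gδ ![1,0,0,0]) (h2 ![1,0,0,0])
    have heq : (δ ![1,0,0,0] - ![1,0,0,0]) + (2:A) • (![1,0,0,0])
        = (![0,1,0,0] : Fin 4 → A) := by
      subst hδ
      funext i
      fin_cases i <;>
        simp [Matrix.mulVecLin, Matrix.mulVec, dotProduct, Fin.sum_univ_four, Matrix.vecHead, Matrix.vecTail] <;> ring
    rwa [heq] at h
  have e3 : (![0,0,0,1] : Fin 4 → A) ∈ S := by
    have h := S.add_mem (S.add_mem (S.neg_mem (gδ ![0,0,1,0])) (S.neg_mem (gδ ![0,0,0,1])))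
      (h2 (-![0,0,1,0]))
    have heq : -(δ ![0,0,1,0] - ![0,0,1,0]) + -(δ ![0,0,0,1] - ![0,0,0,1]) + (2:A) • (-![0,0,1,0])
        = (![0,0,0,1] : Fin 4 → A) := by
      subst hδ
      funext i
      fin_cases i <;>
        simp [Matrix.mulVecLin, Matrix.mulVec, dotProduct, Fin.sum_univ_four, Matrix.vecHead, Matrix.vecTail] <;> ring
    rwa [heq] at h
  have e2 : (![0,0,1,0] : Fin 4 → A) ∈ S := by
    have h := S.add_mem e3 (S.neg_mem (gδ ![0,0,1,0]))
    have heq : (![0,0,0,1] : Fin 4 → A) + -(δ ![0,0,1,0] - ![0,0,1,0])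
        = (![0,0,1,0] : Fin 4 → A) := by
      subst hδ
      funext i
      fin_cases i <;>
        simp [Matrix.mulVecLin, Matrix.mulVec, dotProduct, Fin.sum_univ_four, Matrix.vecHead, Matrix.vecTail] <;> ring
    rwa [heq] at h
  have hTop : S = ⊤ := by
    rw [Submodule.eq_top_iff']
    intro v
    have h := S.add_mem (S.add_mem (S.add_mem (S.smul_mem (v 0) e0) (S.smul_mem (v 1) e1))
      (S.smul_mem (v 2) e2)) (S.smul_mem (v 3) e3)
    have heq : v 0 • (![1,0,0,0] : Fin 4 → A) + v 1 • ![0,1,0,0] + v 2 • ![0,0,1,0]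
        + v 3 • ![0,0,0,1] = v := by
      funext i
      fin_cases i <;> simp
    rwa [heq] at h
  exact Submodule.Quotient.subsingleton_iff.mpr hTop
end

section
/- Let $A$ be a commutative ring, $\alpha_* = -\mathrm{id}$ on $A^4$, and $\delta_*(v_1,v_2,v_3,v_4) = (-v_1 - v_2, v_1, v_4, -v_3 + v_4)$ in coordinates (i.e., $\delta_*(x_1) = -x_1+x_2$, $\delta_*(x_2) = -x_1$, $\delta_*(y_1) = y_2$, $\delta_*(y_2) = -y_1-y_2$). If $d$ is a crossed homomorphism on a group with elements $a, e$ acting via $\alpha_*, \delta_*$ and satisfying $aea = e$, and $d(a) = (\omega_{11},\omega_{12},\omega_{13},\omega_{14})$, $d(e) = (\omega_{41},\omega_{42},\omega_{43},\omega_{44})$, then $2\omega_{11} + \omega_{12} = 2\omega_{41}$, $-\omega_{11} + \omega_{12} = 2\omega_{42}$, $\omega_{13} + \omega_{14} = 2\omega_{43}$, and $-\omega_{13} + 2\omega_{14} = 2\omega_{44}$. -/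
theorem stmt_7 (A : Type*) [CommRing A] {G : Type*} [Group G]
    (ρ : G →* Module.End A (Fin 4 → A))
    (a e : G)
    (hρa : ρ a = (-(1 : Matrix (Fin 4) (Fin 4) A)).mulVecLin)
    (hρe : ρ e = (!![-1,-1,0,0; 1,0,0,0; 0,0,0,-1; 0,0,1,-1] :
      Matrix (Fin 4) (Fin 4) A).mulVecLin)
    (hrel : a * e * a = e)
    (d : G → (Fin 4 → A))
    (hd : ∀ g g' : G, d (g * g') = d g + ρ g (d g'))
    (ω11 ω12 ω13 ω14 ω41 ω42 ω43 ω44 : A)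
    (hda : d a = ![ω11, ω12, ω13, ω14])
    (hde : d e = ![ω41, ω42, ω43, ω44]) :
    2 * ω11 + ω12 = 2 * ω41 ∧ -ω11 + ω12 = 2 * ω42 ∧
    ω13 + ω14 = 2 * ω43 ∧ -ω13 + 2 * ω14 = 2 * ω44 := by
  have key : d a + ρ a (d e) + ρ a (ρ e (d a)) = d e := by
    calc d a + ρ a (d e) + ρ a (ρ e (d a))
        = d a + ρ a (d e + ρ e (d a)) := by rw [map_add]; ring
      _ = d a + ρ a (d (e * a)) := by rw [hd e a]
      _ = d (a * (e * a)) := (hd a (e * a)).symm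
      _ = d e := by rw [← mul_assoc, hrel]
  rw [hda, hde, hρa, hρe] at key
  have h0 := congrFun key 0
  have h1 := congrFun key 1
  have h2 := congrFun key 2
  have h3 := congrFun key 3
  simp [Matrix.mulVecLin, Matrix.neg_mulVec, Matrix.one_mulVec, Matrix.mulVec, dotProduct, Fin.sum_univ_four, Matrix.vecHead, Matrix.vecTail] at h0 h1 h2 h3
  exact ⟨by linear_combination h0, by linear_combination h1, by linear_combination h2, by linear_combination h3⟩
end

section
/- Let $A$ be a commutative ring, $\alpha_* = -\mathrm{id}$ on $A^4$, and $\beta_*(v_1,v_2,v_3,v_4) = (v_1, -v_2, v_3, -v_4)$. If $d$ is a crossed homomorphism on a group with elements $a, b$ acting via $\alpha_*, \beta_*$ and satisfying $aba = b$, with $d(a) = (\omega_{11},\omega_{12},\omega_{13},\omega_{14})$ and $d(b) = (\omega_{21},\omega_{22},\omega_{23},\omega_{24})$, then $2\omega_{21} = 2\omega_{23} = 0$, $2\omega_{12} = 2\omega_{22}$, and $2\omega_{14} = 2\omega_{24}$. -/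
theorem stmt_8 (A : Type*) [CommRing A] {G : Type*} [Group G]
    (ρ : G →* Module.End A (Fin 4 → A))
    (a b : G)
    (hρa : ρ a = (-(1 : Matrix (Fin 4) (Fin 4) A)).mulVecLin)
    (hρb : ρ b = (!![1,0,0,0; 0,-1,0,0; 0,0,1,0; 0,0,0,-1] :
      Matrix (Fin 4) (Fin 4) A).mulVecLin)
    (hrel : a * b * a = b)
    (d : G → (Fin 4 → A))
    (hd : ∀ g g' : G, d (g * g') = d g + ρ g (d g'))
    (ω11 ω12 ω13 ω14 ω21 ω22 ω23 ω24 : A)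
    (hda : d a = ![ω11, ω12, ω13, ω14])
    (hdb : d b = ![ω21, ω22, ω23, ω24]) :
    2 * ω21 = 0 ∧ 2 * ω23 = 0 ∧ 2 * ω12 = 2 * ω22 ∧ 2 * ω14 = 2 * ω24 := by
  have key : d a + ρ a (d b) + ρ (a * b) (d a) = d b := by
    rw [← hd, ← hd, hrel]
  rw [map_mul] at key
  have h1 := congrFun key 0
  have h2 := congrFun key 1
  have h3 := congrFun key 2
  have h4 := congrFun key 3
  simp [hρa, hρb, hda, hdb, Matrix.mulVecLin, Matrix.mulVec, dotProduct,
    Fin.sum_univ_four, Module.End.mul_apply, Matrix.neg_mulVec, Matrix.one_mulVec] at h1 h2 h3 h4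
  refine ⟨by linear_combination -h1, by linear_combination -h3,
    by linear_combination h2, by linear_combination h4⟩
end

section
/- Let $A$ be a commutative ring, and let $\gamma_*, \delta_*$ act on $A^4$ by $\gamma_*(v) = (-v_2,-v_1,-v_4,-v_3)$ and $\delta_*(x_1) = -x_1+x_2$, $\delta_*(x_2) = -x_1$, $\delta_*(y_1) = y_2$, $\delta_*(y_2) = -y_1-y_2$. If $d$ is a crossed homomorphism on a group with elements $c, e$ acting via $\gamma_*, \delta_*$ and satisfying $ce^2c = e$, with $d(c) = (\omega_{3j})_j$ and $d(e) = (\omega_{4j})_j$, then $2\omega_{31} + \omega_{32} = 2\omega_{41} + \omega_{42}$ and $\omega_{33} = \omega_{43}$. -/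
theorem stmt_10 (A : Type*) [CommRing A] {G : Type*} [Group G]
    (ρ : G →* Module.End A (Fin 4 → A))
    (c e : G)
    (hρc : ρ c = (!![0,-1,0,0; -1,0,0,0; 0,0,0,-1; 0,0,-1,0] :
      Matrix (Fin 4) (Fin 4) A).mulVecLin)
    (hρe : ρ e = (!![-1,-1,0,0; 1,0,0,0; 0,0,0,-1; 0,0,1,-1] :
      Matrix (Fin 4) (Fin 4) A).mulVecLin)
    (hrel : c * e ^ 2 * c = e)
    (d : G → (Fin 4 → A))
    (hd : ∀ g g' : G, d (g * g') = d g + ρ g (d g'))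
    (ω31 ω32 ω33 ω34 ω41 ω42 ω43 ω44 : A)
    (hdc : d c = ![ω31, ω32, ω33, ω34])
    (hde : d e = ![ω41, ω42, ω43, ω44]) :
    2 * ω31 + ω32 = 2 * ω41 + ω42 ∧ ω33 = ω43 := by
  have h : d e = d c + ρ c (d e + ρ e (d e + ρ e (d c))) := by
    conv_lhs => rw [← hrel, show c * e ^ 2 * c = c * (e * (e * c)) by rw [pow_two, mul_assoc, mul_assoc],
      hd, hd, hd]
  rw [hρc, hρe, hdc, hde] at h
  have h0 := congrFun h 0
  have h3 := congrFun h 3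
  simp [Matrix.mulVecLin_apply, Matrix.mulVec, dotProduct, Fin.sum_univ_four,
    Matrix.vecHead, Matrix.vecTail, Function.comp] at h0 h3
  exact ⟨by linear_combination -h0, by linear_combination -h3⟩
end

section
/- Under the same system of equations (1a)–(5b) and (*) as above, the elements satisfy $\omega_{22} = \omega_{31} = \omega_{32} = -\omega_{21} = -\omega_{42}$ and $2\omega_{22} = 0$. -/
theorem stmt_12
    (A : Type*) [CommRing A]
    (ω11 ω12 ω13 ω14 ω21 ω22 ω23 ω24 ω31 ω32 ω33 ω34 ω41 ω42 ω43 ω44 : A)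
    (h1a : ω11 + ω12 = ω31 + ω32)
    (h1b : ω13 + ω14 = ω33 + ω34)
    (h2a : 2 * ω11 + ω12 = 2 * ω41)
    (h2b : -ω11 + ω12 = 2 * ω42)
    (h2c : ω13 + ω14 = 2 * ω43)
    (h2d : -ω13 + 2 * ω14 = 2 * ω44)
    (h3a1 : 2 * ω21 = 0) (h3a2 : 2 * ω23 = 0)
    (h3b : 2 * ω12 = 2 * ω22)
    (h3c : 2 * ω14 = 2 * ω24)
    (h4a : ω31 - ω32 - ω22 = ω11 + ω21)
    (h4b : ω31 + ω32 - ω21 = ω12 - ω22)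
    (h4c : ω33 - ω34 - ω24 = ω13 + ω23)
    (h4d : ω33 + ω34 - ω23 = ω14 - ω24)
    (h5a : 2 * ω31 + ω32 = 2 * ω41 + ω42)
    (h5b : ω33 = ω43)
    (hs1 : ω41 = ω11) (hs2 : ω32 = ω22) (hs3 : ω33 = ω13) (hs4 : ω24 = ω44) :
    ω22 = ω31 ∧ ω31 = ω32 ∧ ω32 = -ω21 ∧ -ω21 = -ω42 ∧ 2 * ω22 = 0 := by
  have e12 : ω12 = 0 := by linear_combination h2a + 2*hs1
  have e22 : 2*ω22 = 0 := by linear_combination -h3b + 2*e12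
  have e31 : ω31 = ω11 + ω21 := by linear_combination h4a + hs2 + e22
  have e11 : ω11 = ω31 + ω22 := by linear_combination h1a - e12 + hs2
  have e21 : ω22 = -ω21 := by linear_combination -e11 - e31
  have e31b : ω31 = ω22 := by linear_combination h4b + e12 - hs2 - 2*e22 + e21
  have e42 : ω42 = ω21 := by
    linear_combination -h5a - 2*hs1 + hs2 - 2*e11 - e21
  refine ⟨e31b.symm, e31b.trans hs2.symm, hs2.trans e21, by rw [e42], e22⟩
end

section
/- Under the same system of equations (1a)–(5b) and (*), we have $\omega_{13} = \omega_{14} = \omega_{33} = \omega_{34} = \omega_{43} = 0$. -/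
theorem stmt_13
    (A : Type*) [CommRing A]
    (ω11 ω12 ω13 ω14 ω21 ω22 ω23 ω24 ω31 ω32 ω33 ω34 ω41 ω42 ω43 ω44 : A)
    (h1a : ω11 + ω12 = ω31 + ω32)
    (h1b : ω13 + ω14 = ω33 + ω34)
    (h2a : 2 * ω11 + ω12 = 2 * ω41)
    (h2b : -ω11 + ω12 = 2 * ω42)
    (h2c : ω13 + ω14 = 2 * ω43)
    (h2d : -ω13 + 2 * ω14 = 2 * ω44)
    (h3a1 : 2 * ω21 = 0) (h3a2 : 2 * ω23 = 0)
    (h3b : 2 * ω12 = 2 * ω22)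
    (h3c : 2 * ω14 = 2 * ω24)
    (h4a : ω31 - ω32 - ω22 = ω11 + ω21)
    (h4b : ω31 + ω32 - ω21 = ω12 - ω22)
    (h4c : ω33 - ω34 - ω24 = ω13 + ω23)
    (h4d : ω33 + ω34 - ω23 = ω14 - ω24)
    (h5a : 2 * ω31 + ω32 = 2 * ω41 + ω42)
    (h5b : ω33 = ω43)
    (hs1 : ω41 = ω11) (hs2 : ω32 = ω22) (hs3 : ω33 = ω13) (hs4 : ω24 = ω44) :
    ω13 = 0 ∧ ω14 = 0 ∧ ω33 = 0 ∧ ω34 = 0 ∧ ω43 = 0 := by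
  have e1 : ω43 = ω13 := by linear_combination hs3 - h5b
  have e2 : ω14 = ω13 := by linear_combination h2c + 2*e1
  have e3 : ω13 = 2*ω44 := by linear_combination h2d - 2*e2
  have e4 : 2*ω13 = 2*ω44 := by linear_combination -2*e2 + h3c + 2*hs4
  have h13 : ω13 = 0 := by linear_combination e4 - e3
  refine ⟨h13, ?_, ?_, ?_, ?_⟩
  · linear_combination e2 + h13
  · linear_combination hs3 + h13
  · linear_combination -h1b - hs3 + e2 + h13
  · linear_combination e1 + h13
end

section
/- Under the full system (1a)–(5b) and (*), every solution is determined by the pair $(\omega_{22}, \omega_{23})$ subject only to $2\omega_{22} = 2\omega_{23} = 0$; explicitly, $\omega_{11} = \omega_{12} = \omega_{13} = \omega_{14} = \omega_{21} + \omega_{22} = \omega_{31} - \omega_{22} = \omega_{32} - \omega_{22} = \omega_{33} = \omega_{34} = \omega_{41} = \omega_{42} + \omega_{22} = \omega_{43} = \omega_{24} - \omega_{23} = \omega_{44} - \omega_{23} = 0$. Conversely, any pair $(\omega_{22}, \omega_{23})$ with $2\omega_{22} = 2\omega_{23} = 0$ yields a solution via these formulas. -/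
theorem stmt_15
    (A : Type*) [CommRing A]
    (ω11 ω12 ω13 ω14 ω21 ω22 ω23 ω24 ω31 ω32 ω33 ω34 ω41 ω42 ω43 ω44 : A) :
    (ω11 + ω12 = ω31 + ω32 ∧
      ω13 + ω14 = ω33 + ω34 ∧
      2 * ω11 + ω12 = 2 * ω41 ∧
      -ω11 + ω12 = 2 * ω42 ∧
      ω13 + ω14 = 2 * ω43 ∧
      -ω13 + 2 * ω14 = 2 * ω44 ∧
      2 * ω21 = 0 ∧ 2 * ω23 = 0 ∧
      2 * ω12 = 2 * ω22 ∧
      2 * ω14 = 2 * ω24 ∧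
      ω31 - ω32 - ω22 = ω11 + ω21 ∧
      ω31 + ω32 - ω21 = ω12 - ω22 ∧
      ω33 - ω34 - ω24 = ω13 + ω23 ∧
      ω33 + ω34 - ω23 = ω14 - ω24 ∧
      2 * ω31 + ω32 = 2 * ω41 + ω42 ∧
      ω33 = ω43 ∧
      ω41 = ω11 ∧ ω32 = ω22 ∧ ω33 = ω13 ∧ ω24 = ω44) ↔
    (ω11 = 0 ∧ ω12 = 0 ∧ ω13 = 0 ∧ ω14 = 0 ∧
      ω21 + ω22 = 0 ∧ ω31 - ω22 = 0 ∧ ω32 - ω22 = 0 ∧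
      ω33 = 0 ∧ ω34 = 0 ∧ ω41 = 0 ∧ ω42 + ω22 = 0 ∧ ω43 = 0 ∧
      ω24 - ω23 = 0 ∧ ω44 - ω23 = 0 ∧
      2 * ω22 = 0 ∧ 2 * ω23 = 0) := by
  constructor
  · rintro ⟨h1, h2, h3, h4, h5, h6, h7, h8, h9, h10, h11, h12, h13, h14, h15, h16,
      k1, k2, k3, k4⟩
    refine ⟨?_, ?_, ?_, ?_, ?_, ?_, ?_, ?_, ?_, ?_, ?_, ?_, ?_, ?_, ?_, ?_⟩
    · linear_combination 4*h1 - h3 - h4 - h9 + 2*h15 + 2*k1 + 2*k2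
    · linear_combination h3 + 2*k1
    · linear_combination -h6 + h10 + 2*k4
    · linear_combination h5 - h6 + h10 - 2*h16 + 2*k3 + 2*k4
    · linear_combination -h1 - h3 + h9 - h11 - 2*k1 - 2*k2
    · linear_combination 3*h1 - 2*h3 - h4 + 2*h15 + k2
    · linear_combination k2
    · linear_combination -h6 + h10 + k3 + 2*k4
    · linear_combination -h2 + h5 - h6 + h10 - 2*h16 + k3 + 2*k4
    · linear_combination 4*h1 - h3 - h4 - h9 + 2*h15 + 3*k1 + 2*k2
    · linear_combination -2*h1 + 2*h3 - h15 + 2*k1 - k2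
    · linear_combination -h6 + h10 - h16 + k3 + 2*k4
    · linear_combination -h2 + 3*h5 - 3*h6 + 2*h10 + h13 - 6*h16 + 4*k3 + 6*k4
    · linear_combination -h2 + 3*h5 - 3*h6 + 2*h10 + h13 - 6*h16 + 4*k3 + 5*k4
    · linear_combination 2*h3 - h9 + 4*k1
    · linear_combination 2*h2 - 4*h5 + 4*h6 - 3*h10 - 2*h13 + 8*h16 - 4*k3 - 8*k4
  · rintro ⟨g1, g2, g3, g4, g5, g6, g7, g8, g9, g10, g11, g12, g13, g14, g15, g16⟩
    refine ⟨?_, ?_, ?_, ?_, ?_, ?_, ?_, ?_, ?_, ?_, ?_, ?_, ?_, ?_, ?_, ?_, ?_, ?_, ?_, ?_⟩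
    · linear_combination g1 + g2 - g6 - g7 - g15
    · linear_combination g3 + g4 - g8 - g9
    · linear_combination 2*g1 + g2 - 2*g10
    · linear_combination -g1 + g2 - 2*g11 + g15
    · linear_combination g3 + g4 - 2*g12
    · linear_combination -g3 + 2*g4 - 2*g14 - g16
    · linear_combination 2*g5 - g15
    · linear_combination g16
    · linear_combination 2*g2 - g15
    · linear_combination 2*g4 - 2*g13 - g16
    · linear_combination -g1 - g5 + g6 - g7
    · linear_combination -g2 - g5 + g6 + g7 + 2*g15
    · linear_combination -g3 + g8 - g9 - g13 - g16
    · linear_combination -g4 + g8 + g9 + g13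
    · linear_combination 2*g6 + g7 - 2*g10 - g11 + 2*g15
    · linear_combination g8 - g12
    · linear_combination -g1 + g10
    · linear_combination g7
    · linear_combination -g3 + g8
    · linear_combination g13 - g14
end
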